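/- arXiv:math/0612439 — 2 statements merged into one kernel-verified Lean document; each statement's English description precedes it below -/
import Mathlib

section
/- A linear map T : ℤ^d → ℤ^d is complexity preserving (i.e., for every linear map Ψ : ℤ^d → ℤ^t the Green-Tao complexities of Ψ and Ψ∘T coincide) if and only if T(ℤ^d) has rank d. -/
/-- The coefficient vector in `ℚ^d` of a linear form `ψ : ℤ^d → ℤ`. -/
noncomputable def coeffVec {d : ℕ} (ψ : (Fin d → ℤ) →+ ℤ) : Fin d → ℚ :=
  fun k => (ψ (Pi.single k 1) : ℚ)

/-- `P` is a Green-Tao partition of size `s` of the system `ψ` at `i`: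
the forms `ψ j`, `j ≠ i`, are partitioned into `s+1` classes (the fibers of `P`),
and `ψ i` does not lie in the `ℚ`-linear span of any class. -/
def IsGTPartition {d t : ℕ} (ψ : Fin t → ((Fin d → ℤ) →+ ℤ)) (i : Fin t) (s : ℕ)
    (P : {j : Fin t // j ≠ i} → Fin (s + 1)) : Prop :=
  ∀ k : Fin (s + 1),
    coeffVec (ψ i) ∉
      Submodule.span ℚ {v : Fin d → ℚ | ∃ j : {j : Fin t // j ≠ i}, P j = k ∧ v = coeffVec (ψ j.1)}

/-- The `i`-complexity of a system of linear forms: the least size of a Green-Tao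
partition at `i`, or `∞` if there is none. -/
noncomputable def iComplexity {d t : ℕ} (ψ : Fin t → ((Fin d → ℤ) →+ ℤ)) (i : Fin t) : ℕ∞ :=
  sInf {n : ℕ∞ | ∃ s : ℕ, (s : ℕ∞) = n ∧ ∃ P, IsGTPartition ψ i s P}

/-- The Green-Tao complexity of a system of linear forms. -/
noncomputable def GTComplexity {d t : ℕ} (ψ : Fin t → ((Fin d → ℤ) →+ ℤ)) : ℕ∞ :=
  ⨆ i : Fin t, iComplexity ψ i

open Matrix

namespace GTAux

variable {d : ℕ}

/-- The integer matrix of `T`, with `k`-th row `T eₖ`. -/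
def matZ (T : (Fin d → ℤ) →+ (Fin d → ℤ)) : Matrix (Fin d) (Fin d) ℤ :=
  Matrix.of fun k l => T (Pi.single k 1) l

lemma addHom_apply {M : Type*} [AddCommGroup M] (F : (Fin d → ℤ) →+ M) (v : Fin d → ℤ) :
    F v = ∑ k, v k • F (Pi.single k 1) := by
  conv_lhs => rw [← Finset.univ_sum_single v]
  rw [map_sum]
  refine Finset.sum_congr rfl fun k _ => ?_
  have h : (Pi.single k (v k) : Fin d → ℤ) = v k • (Pi.single k 1 : Fin d → ℤ) := by
    funext l
    by_cases hl : l = k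
    · subst hl; simp
    · simp [Pi.single_eq_of_ne hl]
  rw [h, map_zsmul]

lemma T_apply (T : (Fin d → ℤ) →+ (Fin d → ℤ)) (v : Fin d → ℤ) :
    T v = (matZ T)ᵀ.mulVec v := by
  rw [addHom_apply T v]
  funext l
  simp [Matrix.mulVec, dotProduct, matZ, Finset.sum_apply, mul_comm]

lemma coeffVec_comp (T : (Fin d → ℤ) →+ (Fin d → ℤ)) (ψ : (Fin d → ℤ) →+ ℤ) :
    coeffVec (ψ.comp T) = ((matZ T).map (Int.cast : ℤ → ℚ)).mulVec (coeffVec ψ) := by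
  funext k
  simp only [coeffVec, AddMonoidHom.comp_apply]
  rw [addHom_apply ψ (T (Pi.single k 1))]
  push_cast
  simp [Matrix.mulVec, dotProduct, matZ, coeffVec, smul_eq_mul]

lemma isGT_single_iff (χ : (Fin d → ℤ) →+ ℤ) (s : ℕ) (P : {j : Fin 1 // j ≠ 0} → Fin (s + 1)) :
    IsGTPartition (fun _ : Fin 1 => χ) 0 s P ↔ coeffVec χ ≠ 0 := by
  have hempty : ∀ k : Fin (s + 1),
      {v : Fin d → ℚ | ∃ j : {j : Fin 1 // j ≠ (0 : Fin 1)}, P j = k ∧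
        v = coeffVec ((fun _ : Fin 1 => χ) j.1)} = ∅ := by
    intro k
    ext v
    simp only [Set.mem_setOf_eq, Set.mem_empty_iff_false, iff_false]
    rintro ⟨⟨j, hj⟩, -, -⟩
    exact hj (Subsingleton.elim j 0)
  unfold IsGTPartition
  constructor
  · intro h hc
    have h0 := h 0
    rw [hempty 0, Submodule.span_empty, Submodule.mem_bot] at h0
    exact h0 hc
  · intro hc k
    rw [hempty k, Submodule.span_empty, Submodule.mem_bot]
    exact hc

lemma iComplexity_single_of_ne (χ : (Fin d → ℤ) →+ ℤ) (hχ : coeffVec χ ≠ 0) :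
    iComplexity (fun _ : Fin 1 => χ) 0 = 0 := by
  refine le_antisymm (sInf_le ?_) zero_le
  exact ⟨0, by norm_num, fun _ => 0, (isGT_single_iff χ 0 _).mpr hχ⟩

lemma iComplexity_single_of_eq (χ : (Fin d → ℤ) →+ ℤ) (hχ : coeffVec χ = 0) :
    iComplexity (fun _ : Fin 1 => χ) 0 = ⊤ := by
  unfold iComplexity
  refine (congrArg sInf (?_ : _ = (∅ : Set ℕ∞))).trans sInf_empty
  ext n
  simp only [Set.mem_setOf_eq, Set.mem_empty_iff_false, iff_false]
  rintro ⟨s, -, P, hP⟩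
  exact (isGT_single_iff χ s P).mp hP hχ

lemma GTComplexity_single (ψ : Fin 1 → ((Fin d → ℤ) →+ ℤ)) :
    GTComplexity ψ = iComplexity ψ 0 := by
  unfold GTComplexity
  refine le_antisymm (iSup_le fun i => ?_) (le_iSup _ 0)
  rw [Subsingleton.elim i 0]

end GTAux

open GTAux

theorem complexity_preserving_iff_injective {d : ℕ}
    (T : (Fin d → ℤ) →+ (Fin d → ℤ)) :
    (∀ (t : ℕ) (ψ : Fin t → ((Fin d → ℤ) →+ ℤ)),
        GTComplexity (fun j => (ψ j).comp T) = GTComplexity ψ) ↔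
      Function.Injective ⇑T := by
  constructor
  · intro h
    by_contra hT
    rw [Function.not_injective_iff] at hT
    obtain ⟨a, b, hab, hne⟩ := hT
    have hv0 : a - b ≠ 0 := sub_ne_zero.mpr hne
    have hTv : T (a - b) = 0 := by rw [map_sub, hab, sub_self]
    have hdet : ((matZ T)ᵀ).det = 0 :=
      Matrix.exists_mulVec_eq_zero_iff.mp ⟨a - b, hv0, by rw [← T_apply, hTv]⟩
    have hdet' : (matZ T).det = 0 := by rwa [Matrix.det_transpose] at hdet
    obtain ⟨u, hu0, hu⟩ := Matrix.exists_mulVec_eq_zero_iff.mpr hdet'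
    set φ : (Fin d → ℤ) →+ ℤ := AddMonoidHom.mk' (fun w => dotProduct u w)
      (fun x y => dotProduct_add u x y) with hφ
    have hφT : ∀ w, φ (T w) = 0 := by
      intro w
      show dotProduct u (T w) = 0
      rw [T_apply, Matrix.dotProduct_mulVec, Matrix.vecMul_transpose, hu,
        zero_dotProduct]
    have hcoeffφ : coeffVec φ ≠ 0 := by
      intro h0
      apply hu0
      funext k
      have hk := congrFun h0 k
      have : ((u k : ℤ) : ℚ) = 0 := by
        simpa [coeffVec, hφ, dotProduct, Pi.single_apply, Finset.sum_ite_eq] using hk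
      exact_mod_cast this
    have hcoeffcomp : coeffVec (φ.comp T) = 0 := by
      funext k
      simp [coeffVec, hφT]
    have hmain := h 1 (fun _ => φ)
    rw [GTComplexity_single, GTComplexity_single,
      iComplexity_single_of_ne φ hcoeffφ] at hmain
    have htop : iComplexity (fun j : Fin 1 => ((fun _ : Fin 1 => φ) j).comp T) 0 = (⊤ : ℕ∞) :=
      iComplexity_single_of_eq (φ.comp T) hcoeffcomp
    rw [htop] at hmain
    simp at hmain
  · intro hT t ψ
    set A : Matrix (Fin d) (Fin d) ℚ := (matZ T).map (Int.cast : ℤ → ℚ) with hA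
    have hdetZ : (matZ T).det ≠ 0 := by
      intro h0
      obtain ⟨v, hv0, hv⟩ := Matrix.exists_mulVec_eq_zero_iff.mpr
        (by rwa [Matrix.det_transpose] : ((matZ T)ᵀ).det = 0)
      exact hv0 (hT (show T v = T 0 by rw [T_apply, hv, map_zero]))
    have hdet : A.det ≠ 0 := by
      have hcast : A.det = ((matZ T).det : ℚ) :=
        (RingHom.map_det (Int.castRingHom ℚ) (matZ T)).symm
      rw [hcast]
      exact_mod_cast hdetZ
    have hinj : Function.Injective A.mulVecLin := by
      intro x y hxy
      by_contra hne
      have hz : A *ᵥ (x - y) = 0 := by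
        rw [Matrix.mulVec_sub]
        simpa [Matrix.mulVecLin_apply, sub_eq_zero] using hxy
      exact hdet (Matrix.exists_mulVec_eq_zero_iff.mp ⟨x - y, sub_ne_zero.mpr hne, hz⟩)
    let e : (Fin d → ℚ) ≃ₗ[ℚ] (Fin d → ℚ) :=
      LinearEquiv.ofBijective A.mulVecLin ⟨hinj, LinearMap.injective_iff_surjective.mp hinj⟩
    have hco : ∀ χ : (Fin d → ℤ) →+ ℤ, coeffVec (χ.comp T) = e (coeffVec χ) := by
      intro χ
      rw [coeffVec_comp]
      rfl
    have hGT : ∀ (i : Fin t) (s : ℕ) (P : {j : Fin t // j ≠ i} → Fin (s + 1)),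
        IsGTPartition (fun j => (ψ j).comp T) i s P ↔ IsGTPartition ψ i s P := by
      intro i s P
      unfold IsGTPartition
      refine forall_congr' fun k => not_congr ?_
      have hset : {v : Fin d → ℚ | ∃ j : {j : Fin t // j ≠ i}, P j = k ∧
            v = coeffVec (((fun j => (ψ j).comp T) j.1))}
          = ⇑e '' {v : Fin d → ℚ | ∃ j : {j : Fin t // j ≠ i}, P j = k ∧ v = coeffVec (ψ j.1)} := by
        ext v
        simp only [Set.mem_setOf_eq, Set.mem_image]
        constructor
        · rintro ⟨j, hj, rfl⟩
          exact ⟨coeffVec (ψ j.1), ⟨j, hj, rfl⟩, (hco _).symm⟩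
        · rintro ⟨w, ⟨j, hj, rfl⟩, rfl⟩
          exact ⟨j, hj, (hco _).symm⟩
      rw [hco (ψ i), hset, Submodule.span_image_linearEquiv e]
      constructor
      · intro hm
        obtain ⟨y, hy, hey⟩ := Submodule.mem_map.mp hm
        rwa [← e.injective hey]
      · intro hm
        exact Submodule.mem_map_of_mem hm
    have hi : ∀ i, iComplexity (fun j => (ψ j).comp T) i = iComplexity ψ i := by
      intro i
      unfold iComplexity
      congr 1
      ext n
      simp only [Set.mem_setOf_eq]
      constructor
      · rintro ⟨s, hs, P, hP⟩; exact ⟨s, hs, P, (hGT i s P).mp hP⟩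
      · rintro ⟨s, hs, P, hP⟩; exact ⟨s, hs, P, (hGT i s P).mpr hP⟩
    unfold GTComplexity
    exact iSup_congr hi
end

section
/- Let Ψ : ℤ^d → ℤ^t be a linear map of finite Green-Tao complexity at most s, and let L be a finite-index subgroup of Ψ(ℤ^d). Then L = (Ψ∘T)(ℤ^d) for some linear map Ψ∘T : ℤ^d → ℤ^t of Green-Tao complexity at most s, where T : ℤ^d → ℤ^d is injective with T(ℤ^d) = Ψ^{-1}(L). -/
/-- The linear map `ℤ^d → ℤ^t` determined by a system of linear forms. -/
def systemMap {d t : ℕ} (ψ : Fin t → ((Fin d → ℤ) →+ ℤ)) :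
    (Fin d → ℤ) →+ (Fin t → ℤ) :=
  AddMonoidHom.mk' (fun n k => ψ k n) (by intro a b; funext k; simp)


open Matrix in
private lemma addHom_expand {d : ℕ} {A : Type*} [AddCommGroup A] (T : (Fin d → ℤ) →+ A)
    (x : Fin d → ℤ) : T x = ∑ l, x l • T (Pi.single l 1) := by
  have hx : x = ∑ l, x l • (Pi.single l (1:ℤ)) := by
    funext k
    simp [Pi.single_apply]
  nth_rewrite 1 [hx]
  rw [map_sum]
  exact Finset.sum_congr rfl fun l _ => map_zsmul T _ _

theorem sublattice_of_finite_index_is_range_of_bounded_complexity {d t : ℕ}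
    (ψ : Fin t → ((Fin d → ℤ) →+ ℤ)) (s : ℕ)
    (hs : GTComplexity ψ ≤ (s : ℕ∞))
    (L : AddSubgroup (Fin t → ℤ)) (hL : L ≤ (systemMap ψ).range)
    (hfin : (L.addSubgroupOf (systemMap ψ).range).FiniteIndex) :
    ∃ T : (Fin d → ℤ) →+ (Fin d → ℤ),
      Function.Injective ⇑T ∧ T.range = L.comap (systemMap ψ) ∧
        ((systemMap ψ).comp T).range = L ∧
        GTComplexity (fun j => (ψ j).comp T) ≤ (s : ℕ∞) := by
  classical
  -- the preimage subgroup `M = Ψ⁻¹(L)` has finite index in `ℤ^d`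
  set M : AddSubgroup (Fin d → ℤ) := L.comap (systemMap ψ) with hMdef
  have hMindex : M.index ≠ 0 := by
    have h1 : M.index = (L.addSubgroupOf (systemMap ψ).range).index :=
      AddSubgroup.index_comap L (systemMap ψ)
    rw [h1]
    exact hfin.index_ne_zero
  set N : Submodule ℤ (Fin d → ℤ) := AddSubgroup.toIntSubmodule M with hNdef
  have hmemN : ∀ x, x ∈ N ↔ x ∈ M := fun x => Iff.rfl
  -- `N` is free of rank `d`
  have hc : (M.index : ℤ) ≠ 0 := Int.natCast_ne_zero.mpr hMindex
  have hli0 : LinearIndependent ℤ (fun k : Fin d => (M.index : ℤ) • Pi.single k (1:ℤ)) := by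
    rw [Fintype.linearIndependent_iff]
    intro g hg k
    have h := congrFun hg k
    simp only [Finset.sum_apply, Pi.smul_apply, Pi.single_apply, smul_eq_mul, mul_ite,
      mul_one, mul_zero, Finset.sum_ite_eq, Finset.sum_ite_eq', Finset.mem_univ, if_true, Pi.zero_apply] at h
    exact (mul_eq_zero.mp h).resolve_right hc
  have hmemsingle : ∀ k : Fin d, (M.index : ℤ) • (Pi.single k (1:ℤ)) ∈ N := by
    intro k
    have := AddSubgroup.nsmul_index_mem M (Pi.single k (1:ℤ))
    rw [hmemN]
    simpa [natCast_zsmul] using this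
  have hliN : LinearIndependent ℤ (fun k : Fin d =>
      (⟨(M.index : ℤ) • Pi.single k (1:ℤ), hmemsingle k⟩ : N)) := by
    apply LinearIndependent.of_comp N.subtype
    convert hli0
    rfl
  have hfr : Module.finrank ℤ N = d := by
    refine le_antisymm ?_ ?_
    · have := N.finrank_le
      simpa [Module.finrank_pi] using this
    · simpa using hliN.fintype_card_le_finrank
  let bN : Module.Basis (Fin d) ℤ N := Module.finBasisOfFinrankEq ℤ N hfr
  let e : (Fin d → ℤ) ≃ₗ[ℤ] N := (Pi.basisFun ℤ (Fin d)).equiv bN (Equiv.refl _)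
  let Tlin : (Fin d → ℤ) →ₗ[ℤ] (Fin d → ℤ) := N.subtype ∘ₗ (e : (Fin d → ℤ) →ₗ[ℤ] N)
  refine ⟨Tlin.toAddMonoidHom, ?_, ?_, ?_, ?_⟩
  case _ =>
    exact N.injective_subtype.comp e.injective
  case _ =>
    ext x
    simp only [AddMonoidHom.mem_range, LinearMap.toAddMonoidHom_coe]
    constructor
    · rintro ⟨y, rfl⟩
      exact (e y).2
    · intro hx
      refine ⟨e.symm ⟨x, hx⟩, ?_⟩
      show N.subtype (e (e.symm ⟨x, hx⟩)) = x
      simp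
  case _ =>
    have h1 : ((systemMap ψ).comp Tlin.toAddMonoidHom).range
        = (Tlin.toAddMonoidHom.range).map (systemMap ψ) :=
      AddMonoidHom.range_comp _ _
    have h2 : Tlin.toAddMonoidHom.range = M := by
      ext x
      simp only [AddMonoidHom.mem_range, LinearMap.toAddMonoidHom_coe]
      constructor
      · rintro ⟨y, rfl⟩
        exact (e y).2
      · intro hx
        refine ⟨e.symm ⟨x, hx⟩, ?_⟩
        show N.subtype (e (e.symm ⟨x, hx⟩)) = x
        simp
    rw [h1, h2, hMdef, AddSubgroup.map_comap_eq]
    exact inf_eq_right.mpr hL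
  case _ =>
    -- complexity part
    set T : (Fin d → ℤ) →+ (Fin d → ℤ) := Tlin.toAddMonoidHom with hT
    have hinj : Function.Injective ⇑T := N.injective_subtype.comp e.injective
    set Aℤ : Matrix (Fin d) (Fin d) ℤ := Matrix.of (fun l k => T (Pi.single k 1) l) with hA
    have hmv : ∀ w : Fin d → ℤ, Aℤ.mulVec w = T w := by
      intro w
      funext l
      have hw := congrFun (addHom_expand T w) l
      simp only [Finset.sum_apply, Pi.smul_apply, smul_eq_mul] at hw
      rw [hw]
      simp only [Matrix.mulVec, dotProduct, hA, Matrix.of_apply]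
      exact Finset.sum_congr rfl fun k _ => mul_comm _ _
    have hdet : Aℤ.det ≠ 0 := by
      intro h
      obtain ⟨v, hv, hv0⟩ := Matrix.exists_mulVec_eq_zero_iff.mpr h
      apply hv
      apply hinj
      rw [← hmv, hv0, map_zero]
    set Aq : Matrix (Fin d) (Fin d) ℚ := (Int.castRingHom ℚ).mapMatrix Aℤ with hAq
    have hdetq : Aq.det ≠ 0 := by
      rw [hAq, ← RingHom.map_det]
      simp only [Int.coe_castRingHom, ne_eq, Int.cast_eq_zero]
      exact hdet
    have hvminj : Function.Injective ⇑Aq.vecMulLinear := by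
      rw [← LinearMap.ker_eq_bot, LinearMap.ker_eq_bot']
      intro v hv
      by_contra hv0
      exact hdetq (Matrix.exists_vecMul_eq_zero_iff.mp ⟨v, hv0, hv⟩)
    have hcoeff : ∀ φ : (Fin d → ℤ) →+ ℤ,
        coeffVec (φ.comp T) = Aq.vecMulLinear (coeffVec φ) := by
      intro φ
      funext k
      have h := addHom_expand φ (T (Pi.single k 1))
      simp only [Matrix.vecMulLinear_apply, Matrix.vecMul, dotProduct]
      rw [coeffVec, AddMonoidHom.comp_apply, h]
      push_cast
      refine Finset.sum_congr rfl fun l _ => ?_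
      simp only [hAq, RingHom.mapMatrix_apply, Matrix.map_apply, hA, Matrix.of_apply,
        Int.coe_castRingHom, coeffVec, smul_eq_mul]
      push_cast
      ring
    -- transfer of GT partitions
    have hpart : ∀ (i : Fin t) (s' : ℕ) (P : {j : Fin t // j ≠ i} → Fin (s' + 1)),
        IsGTPartition ψ i s' P → IsGTPartition (fun j => (ψ j).comp T) i s' P := by
      intro i s' P hP k hmem
      apply hP k
      have hset : {v : Fin d → ℚ | ∃ j : {j : Fin t // j ≠ i},
            P j = k ∧ v = coeffVec ((fun j => (ψ j).comp T) j.1)}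
          = ⇑Aq.vecMulLinear '' {v : Fin d → ℚ | ∃ j : {j : Fin t // j ≠ i},
            P j = k ∧ v = coeffVec (ψ j.1)} := by
        ext v
        constructor
        · rintro ⟨j, hj, rfl⟩
          exact ⟨coeffVec (ψ j.1), ⟨j, hj, rfl⟩, (hcoeff (ψ j.1)).symm⟩
        · rintro ⟨w, ⟨j, hj, rfl⟩, rfl⟩
          exact ⟨j, hj, (hcoeff (ψ j.1)).symm⟩
      rw [hset, hcoeff (ψ i), Submodule.span_image] at hmem
      obtain ⟨y, hy, hyc⟩ := hmem
      rwa [← hvminj hyc]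
    have hle : ∀ i : Fin t,
        iComplexity (fun j => (ψ j).comp T) i ≤ iComplexity ψ i := by
      intro i
      apply sInf_le_sInf
      rintro n ⟨s', rfl, P, hP⟩
      exact ⟨s', rfl, P, hpart i s' P hP⟩
    refine le_trans ?_ hs
    exact iSup_le fun i => le_trans (hle i) (le_iSup (iComplexity ψ) i)
end
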